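/- The nearest-neighbor probability of one uncertain 1D object against another is a continuous function of the query point: for uncertain 1D objects o₁ = [l₁,u₁] and o₂ = [l₂,u₂] with l₁ < u₁ and l₂ < u₂, the function p : ℝ → ℝ defined by p(q) = (U[l₁,u₁] ⊗ U[l₂,u₂]) {(x,y) | |x − q| < |y − q|} is continuous on ℝ. (In particular, between any two query points where the most probable nearest neighbor among {o₁, o₂} changes, there is a probabilistic bisector point where p equals 1/2.) -/
import Mathlib


open MeasureTheory Filter
open scoped ENNReal Topology

/-- The uniform probability measure on the closed interval `[a, b]`. -/
noncomputable def unif (a b : ℝ) : Measure ℝ :=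
  (volume (Set.Icc a b))⁻¹ • volume.restrict (Set.Icc a b)

/-- Probability that the uncertain object `[l₁,u₁]` is nearer to the query point `q`
than the uncertain object `[l₂,u₂]`. -/
noncomputable def nnProb (l₁ u₁ l₂ u₂ q : ℝ) : ℝ≥0∞ :=
  ((unif l₁ u₁).prod (unif l₂ u₂)) {xy : ℝ × ℝ | |xy.1 - q| < |xy.2 - q|}

lemma unif_prob {a b : ℝ} (h : a < b) : IsProbabilityMeasure (unif a b) := by
  constructor
  rw [unif]
  simp only [Measure.smul_apply, Measure.restrict_apply MeasurableSet.univ, Set.univ_inter,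
    smul_eq_mul, Real.volume_Icc]
  exact ENNReal.inv_mul_cancel (by simp; linarith) (by simp)

lemma unif_singleton (a b p : ℝ) : unif a b {p} = 0 := by
  rw [unif]
  simp only [Measure.smul_apply, Measure.restrict_apply (measurableSet_singleton p),
    smul_eq_mul]
  have : volume ({p} ∩ Set.Icc a b) = 0 :=
    measure_mono_null Set.inter_subset_left Real.volume_singleton
  rw [this, mul_zero]

lemma unif_abs_eq (a b q c : ℝ) : unif a b {y : ℝ | |y - q| = c} = 0 := by
  have hsub : {y : ℝ | |y - q| = c} ⊆ {q + c} ∪ {q - c} := by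
    intro y hy
    rcases abs_cases (y - q) with ⟨h1, _⟩ | ⟨h1, _⟩
    · left; simp only [Set.mem_singleton_iff]; have := hy; simp only [Set.mem_setOf_eq] at this
      rw [h1] at this; linarith
    · right; simp only [Set.mem_singleton_iff]; have := hy; simp only [Set.mem_setOf_eq] at this
      rw [h1] at this; linarith
  refine measure_mono_null hsub ?_
  refine measure_union_null ?_ ?_ <;> exact unif_singleton _ _ _

lemma boundary_null (l₁ u₁ l₂ u₂ q : ℝ) (h₁ : l₁ < u₁) (h₂ : l₂ < u₂) :
    ((unif l₁ u₁).prod (unif l₂ u₂)) {xy : ℝ × ℝ | |xy.1 - q| = |xy.2 - q|} = 0 := by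
  haveI := unif_prob h₁
  haveI := unif_prob h₂
  have hS : MeasurableSet {xy : ℝ × ℝ | |xy.1 - q| = |xy.2 - q|} :=
    measurableSet_eq_fun ((continuous_fst.sub continuous_const).abs.measurable)
      ((continuous_snd.sub continuous_const).abs.measurable)
  rw [Measure.prod_apply hS]
  have : ∀ x : ℝ, unif l₂ u₂ (Prod.mk x ⁻¹' {xy : ℝ × ℝ | |xy.1 - q| = |xy.2 - q|}) = 0 := by
    intro x
    have : (Prod.mk x ⁻¹' {xy : ℝ × ℝ | |xy.1 - q| = |xy.2 - q|}) =
        {y : ℝ | |y - q| = |x - q|} := by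
      ext y; simp [eq_comm]
    rw [this]
    exact unif_abs_eq _ _ _ _
  have h0 : ∀ x : ℝ, unif l₂ u₂ {a : ℝ | |x - q| = |a - q|} = 0 := by
    intro x
    have he : {a : ℝ | |x - q| = |a - q|} = {y : ℝ | |y - q| = |x - q|} := by
      ext y; simp [eq_comm]
    rw [he]; exact unif_abs_eq _ _ _ _
  simp [h0]

theorem nnProb_continuous (l₁ u₁ l₂ u₂ : ℝ) (h₁ : l₁ < u₁) (h₂ : l₂ < u₂) :
    Continuous (fun q : ℝ => (nnProb l₁ u₁ l₂ u₂ q).toReal) := by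
  haveI := unif_prob h₁
  haveI := unif_prob h₂
  have hmeas : ∀ q : ℝ, MeasurableSet {xy : ℝ × ℝ | |xy.1 - q| < |xy.2 - q|} := fun q =>
    measurableSet_lt ((continuous_fst.sub continuous_const).abs.measurable)
      ((continuous_snd.sub continuous_const).abs.measurable)
  have key : ∀ q : ℝ, (nnProb l₁ u₁ l₂ u₂ q).toReal
      = ∫ xy, Set.indicator {xy : ℝ × ℝ | |xy.1 - q| < |xy.2 - q|} (fun _ => (1:ℝ)) xy
          ∂((unif l₁ u₁).prod (unif l₂ u₂)) := by
    intro q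
    rw [show (fun _ : ℝ × ℝ => (1:ℝ)) = (1 : ℝ × ℝ → ℝ) from rfl,
      integral_indicator_one (hmeas q)]
    rfl
  rw [continuous_iff_continuousAt]
  intro q₀
  unfold ContinuousAt
  simp only [key]
  apply tendsto_integral_filter_of_dominated_convergence (fun _ => (1:ℝ))
  · exact Eventually.of_forall fun q =>
      (measurable_const.indicator (hmeas q)).aestronglyMeasurable
  · refine Eventually.of_forall fun q => Eventually.of_forall fun xy => ?_
    rw [Set.indicator_apply]; split_ifs <;> simp
  · exact integrable_const 1
  · have hnull := boundary_null l₁ u₁ l₂ u₂ q₀ h₁ h₂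
    have hae : ∀ᵐ xy ∂((unif l₁ u₁).prod (unif l₂ u₂)),
        |xy.1 - q₀| ≠ |xy.2 - q₀| := by
      rw [ae_iff]
      convert hnull using 2
      ext xy; simp
    filter_upwards [hae] with xy hxy
    have c1 : Continuous fun q : ℝ => |xy.1 - q| := (continuous_const.sub continuous_id).abs
    have c2 : Continuous fun q : ℝ => |xy.2 - q| := (continuous_const.sub continuous_id).abs
    rcases lt_or_gt_of_ne hxy with h | h
    · have hev : ∀ᶠ q in 𝓝 q₀, |xy.1 - q| < |xy.2 - q| :=
        c1.continuousAt.eventually_lt c2.continuousAt h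
      have heq : (fun q : ℝ => Set.indicator {xy' : ℝ × ℝ | |xy'.1 - q| < |xy'.2 - q|}
          (fun _ => (1:ℝ)) xy) =ᶠ[𝓝 q₀] fun _ => 1 :=
        hev.mono fun q hq => by simp [Set.indicator_apply, hq]
      have hval : Set.indicator {xy' : ℝ × ℝ | |xy'.1 - q₀| < |xy'.2 - q₀|}
          (fun _ => (1:ℝ)) xy = 1 := by simp [Set.indicator_apply, h]
      rw [hval]
      exact Tendsto.congr' heq.symm tendsto_const_nhds
    · have hev : ∀ᶠ q in 𝓝 q₀, |xy.2 - q| < |xy.1 - q| :=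
        c2.continuousAt.eventually_lt c1.continuousAt h
      have heq : (fun q : ℝ => Set.indicator {xy' : ℝ × ℝ | |xy'.1 - q| < |xy'.2 - q|}
          (fun _ => (1:ℝ)) xy) =ᶠ[𝓝 q₀] fun _ => 0 :=
        hev.mono fun q hq => by simp [Set.indicator_apply, not_lt.mpr hq.le]
      have hval : Set.indicator {xy' : ℝ × ℝ | |xy'.1 - q₀| < |xy'.2 - q₀|}
          (fun _ => (1:ℝ)) xy = 0 := by simp [Set.indicator_apply, not_lt.mpr h.le]
      rw [hval]
      exact Tendsto.congr' heq.symm tendsto_const_nhds
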